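/- Let X be a compact Riemannian manifold with the volume form chosen so that Δ_g is symmetric on L²(X), and let V be a C^∞ real vector field with F := (1/2)Div V ∈ C^∞(X). There is a constant C, independent of h, z, ε, γ, such that for all u ∈ H²(X), all ε > 0, h > 0, γ > 1, and all z ∈ ℂ with Im z ≥ −γh, setting f := (hP_ε − z)u with P_ε = (1/i)V + iεΔ_g, one has: Im⟨f,u⟩_{L²} = h⟨Fu,u⟩_{L²} − hε‖∇_g u‖²_{L²} − (Im z)‖u‖²_{L²}, and consequently ‖∇_g u‖_{L²} ≤ C h^{-1} ε^{-1/2} ‖f‖_{L²} + (C + √γ) ε^{-1/2} ‖u‖_{L²}. -/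

import Mathlib

/- STATEMENT 17 (estimate (6.2) in the proof of Lemma 6.1 of Dyatlov–Zworski,
"Stochastic stability of Pollicott–Ruelle resonances"): the imaginary-part
energy identity and the gradient estimate for `f = (hP_ε - z)u`, `Im z ≥ -γh`.

Abstraction: `H` is `L²(X)` (volume form fixed so that `Δ_g` is symmetric on
`L²`, `⟨-Δu,u⟩ = ‖∇u‖²`), `Dom` is `H²(X)`, `grad = ∇_g`.  `V` is a real `C^∞`
vector field with `F = ½ Div V ∈ C^∞(X)`: `V + V* = -Div V` translates into
`Re⟨Vu,u⟩ = -⟨Fu,u⟩` with `⟨Fu,u⟩` real, and `F` is bounded on `L²`.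
(`⟨f,u⟩` of the paper is `inner ℂ u f` in Mathlib's convention.)
`P ε = (1/i)V + iεΔ`. -/

set_option maxHeartbeats 1000000 in
theorem imaginary_part_energy_estimate
    (H G : Type*) [NormedAddCommGroup H] [InnerProductSpace ℂ H] [CompleteSpace H]
    [NormedAddCommGroup G] [InnerProductSpace ℂ G]
    (Dom : Submodule ℂ H)
    (V Δ : H →ₗ[ℂ] H) (grad : H →ₗ[ℂ] G)
    (P : ℝ → H →ₗ[ℂ] H)
    (hP : ∀ ε : ℝ, P ε = (-Complex.I) • V + (Complex.I * (ε : ℂ)) • Δ)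
    -- `Δ_g ≤ 0` is symmetric, with `⟨-Δu, u⟩ = ‖∇u‖²`
    (hΔ : ∀ u ∈ Dom, (inner ℂ u (Δ u) : ℂ) = ((-(‖grad u‖^2) : ℝ) : ℂ))
    -- `F = ½ Div V`: `Re⟨Vu,u⟩ = -⟨Fu,u⟩`, `⟨Fu,u⟩` real, `F` bounded on `L²`
    (F : H →ₗ[ℂ] H) (CF : ℝ) (hCF : 0 < CF)
    (hF_re : ∀ u ∈ Dom, (inner ℂ u (V u) : ℂ).re = -(inner ℂ u (F u) : ℂ).re)
    (hF_real : ∀ u ∈ Dom, (inner ℂ u (F u) : ℂ).im = 0)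
    (hF_bd : ∀ u, ‖F u‖ ≤ CF * ‖u‖) :
    ∃ C > (0:ℝ), ∀ u ∈ Dom, ∀ ε : ℝ, 0 < ε → ∀ h : ℝ, 0 < h → ∀ γ : ℝ, 1 < γ →
      ∀ z : ℂ, -(γ * h) ≤ z.im →
        -- the identity `Im⟨f,u⟩ = h⟨Fu,u⟩ - hε‖∇_g u‖² - (Im z)‖u‖²` …
        ((inner ℂ u ((h:ℂ) • P ε u - z • u) : ℂ).im
            = h * (inner ℂ u (F u) : ℂ).re - h * ε * ‖grad u‖^2 - z.im * ‖u‖^2) ∧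
        -- … and the resulting gradient estimate
        -- `‖∇_g u‖ ≤ C h⁻¹ ε^{-1/2} ‖f‖ + (C + √γ) ε^{-1/2} ‖u‖`
        ‖grad u‖ ≤ C / (h * Real.sqrt ε) * ‖(h:ℂ) • P ε u - z • u‖
          + (C + Real.sqrt γ) / Real.sqrt ε * ‖u‖ := by
  have hc0 : 0 ≤ Real.sqrt (CF + 1/2) := Real.sqrt_nonneg _
  refine ⟨Real.sqrt (CF + 1/2) + 1, by positivity, ?_⟩
  intro u hu ε hε h hh γ hγ z hz
  have hΔu := hΔ u hu
  have hFre := hF_re u hu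
  set f := (h:ℂ) • P ε u - z • u with hf
  clear_value f
  have him : (inner ℂ u u : ℂ).im = 0 := by
    have := inner_self_im (𝕜 := ℂ) u; rwa [RCLike.im_to_complex] at this
  have hre : (inner ℂ u u : ℂ).re = ‖u‖^2 := by
    have := inner_self_eq_norm_sq (𝕜 := ℂ) u; rwa [RCLike.re_to_complex] at this
  have hId : (inner ℂ u f : ℂ).im
      = h * (inner ℂ u (F u) : ℂ).re - h * ε * ‖grad u‖^2 - z.im * ‖u‖^2 := by
    rw [hf, inner_sub_right, inner_smul_right, inner_smul_right, hP]
    rw [LinearMap.add_apply, LinearMap.smul_apply, LinearMap.smul_apply,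
        inner_add_right, inner_smul_right, inner_smul_right, hΔu]
    simp only [Complex.sub_im, Complex.add_im, Complex.mul_im, Complex.mul_re,
      Complex.ofReal_im, Complex.ofReal_re, Complex.I_re, Complex.I_im,
      Complex.neg_re, Complex.neg_im, him, hre, hFre]
    ring
  refine ⟨hId, ?_⟩
  have habs : |(inner ℂ u f : ℂ).im| ≤ ‖u‖ * ‖f‖ := by
    calc |(inner ℂ u f : ℂ).im| ≤ ‖(inner ℂ u f : ℂ)‖ := Complex.abs_im_le_norm _
    _ = ‖(inner ℂ u f : ℂ)‖ := rfl
    _ ≤ ‖u‖ * ‖f‖ := norm_inner_le_norm u f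
  have hFb : (inner ℂ u (F u) : ℂ).re ≤ CF * (‖u‖ * ‖u‖) := by
    calc (inner ℂ u (F u) : ℂ).re ≤ ‖(inner ℂ u (F u) : ℂ)‖ := Complex.re_le_norm _
    _ = ‖(inner ℂ u (F u) : ℂ)‖ := rfl
    _ ≤ ‖u‖ * ‖F u‖ := norm_inner_le_norm u (F u)
    _ ≤ ‖u‖ * (CF * ‖u‖) := by
        exact mul_le_mul_of_nonneg_left (hF_bd u) (norm_nonneg u)
    _ = CF * (‖u‖ * ‖u‖) := by ring
  have hnu : 0 ≤ ‖u‖ := norm_nonneg u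
  have hnf : 0 ≤ ‖f‖ := norm_nonneg f
  have hkey : h * ε * ‖grad u‖^2 ≤ h * CF * ‖u‖^2 + γ * h * ‖u‖^2 + ‖u‖ * ‖f‖ := by
    have h1 : -(z.im) * ‖u‖^2 ≤ γ * h * ‖u‖^2 := by nlinarith [sq_nonneg ‖u‖]
    have h2 : -((inner ℂ u f : ℂ).im) ≤ ‖u‖ * ‖f‖ := by
      have := neg_abs_le ((inner ℂ u f : ℂ).im); linarith
    have h3 : h * (inner ℂ u (F u) : ℂ).re ≤ h * CF * ‖u‖^2 := by nlinarith
    nlinarith [hId]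
  have hs0 : 0 < Real.sqrt ε := Real.sqrt_pos.mpr hε
  have hs2 : Real.sqrt ε ^ 2 = ε := Real.sq_sqrt hε.le
  have ht1 : 1 ≤ Real.sqrt γ := by
    rw [show (1:ℝ) = Real.sqrt 1 by simp]
    exact Real.sqrt_le_sqrt (by linarith)
  have ht2 : Real.sqrt γ ^ 2 = γ := Real.sq_sqrt (by linarith)
  have hc2 : Real.sqrt (CF + 1/2) ^ 2 = CF + 1/2 := Real.sq_sqrt (by linarith)
  set s := Real.sqrt ε with hsdef
  set t := Real.sqrt γ with htdef
  set c := Real.sqrt (CF + 1/2) with hcdef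
  have ha : (c + 1) / (h * s) * ‖f‖ + (c + 1 + t) / s * ‖u‖
      = ((c + 1) * ‖f‖ + h * (c + 1 + t) * ‖u‖) / (h * s) := by
    field_simp
  rw [ha, le_div_iff₀ (by positivity)]
  have ha0 : 0 ≤ (c + 1) * ‖f‖ + h * (c + 1 + t) * ‖u‖ := by
    have : (0:ℝ) ≤ t := by linarith
    positivity
  have hgs : (‖grad u‖ * (h * s))^2 ≤ ((c + 1) * ‖f‖ + h * (c + 1 + t) * ‖u‖)^2 := by
    have hk2 : h * (h * ε * ‖grad u‖^2)
        ≤ h * (h * CF * ‖u‖^2 + γ * h * ‖u‖^2 + ‖u‖ * ‖f‖) :=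
      mul_le_mul_of_nonneg_left hkey hh.le
    have hL : (‖grad u‖ * (h * s))^2 = h * (h * ε * ‖grad u‖^2) := by
      rw [← hs2]; ring
    have e1 : CF + γ ≤ (c + 1 + t)^2 := by nlinarith [hc2, ht2, ht1, hc0]
    have e2 : (1:ℝ) ≤ 2 * (c + 1) * (c + 1 + t) := by nlinarith
    have p1 : h^2 * ‖u‖^2 * (CF + γ) ≤ h^2 * ‖u‖^2 * (c + 1 + t)^2 :=
      mul_le_mul_of_nonneg_left e1 (by positivity)
    have p2 : h * ‖u‖ * ‖f‖ * 1 ≤ h * ‖u‖ * ‖f‖ * (2 * (c + 1) * (c + 1 + t)) :=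
      mul_le_mul_of_nonneg_left e2 (by positivity)
    nlinarith [p1, p2, hL, hk2, sq_nonneg ((c + 1) * ‖f‖)]
  have h1 := Real.sqrt_le_sqrt hgs
  rwa [Real.sqrt_sq (by positivity), Real.sqrt_sq ha0] at h1
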